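/- Let (x_k, a_k, φ_k)_{k≥1} ⊂ ℝ^n × (0,1] × C([0,∞); ℝ^n) be such that x_k → x, a_k → 0, and φ_k → φ uniformly on compact subsets of [0,∞). Suppose each φ_k is absolutely continuous with φ_k(0) = x_k and φ_k'(t) ∈ K^{a_k}(φ_k(t)) for a.e. t ∈ [0,∞). Then φ is Lipschitz continuous and satisfies φ(0) = x and φ'(t) ∈ K̄(φ(t)) for a.e. t ∈ [0,∞). -/

import Mathlib

open MeasureTheory Set Metric Filter Topology RealInnerProductSpace
open scoped Classical ENNReal

noncomputable section

abbrev Evec (n : ℕ) : Type := EuclideanSpace ℝ (Fin n)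

variable {n N : ℕ}

/-- The cone generated by the vectors `v i`, `i ∈ lam`. -/
def coneGen (v : Fin N → Evec n) (lam : Set (Fin N)) : Set (Evec n) :=
  {y | ∃ c : Fin N → ℝ, (∀ i, 0 ≤ c i) ∧ (∀ i, i ∉ lam → c i = 0) ∧ y = ∑ i, c i • v i}

/-- The polyhedral cone `G = ⋂ i {x : ⟨x, n_i⟩ ≥ 0}`. -/
def Gset (nv : Fin N → Evec n) : Set (Evec n) :=
  {x | ∀ i, 0 ≤ ⟪x, nv i⟫}

/-- `In(x) = {i : ⟨x, n_i⟩ = 0}`. -/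
def inIdx (nv : Fin N → Evec n) (x : Evec n) : Set (Fin N) :=
  {i | ⟪x, nv i⟫ = 0}

/-- The constraint directions `d(x) = cone{d_i, i ∈ In(x)} ∩ S^{n-1}`. -/
def dDir (nv dv : Fin N → Evec n) (x : Evec n) : Set (Evec n) :=
  coneGen dv (inIdx nv x) ∩ sphere (0 : Evec n) 1

/-- The set of inward normals to `G` at `x`. -/
def nSet (nv : Fin N → Evec n) (x : Evec n) : Set (Evec n) :=
  {ν | ‖ν‖ = 1 ∧ ∀ y ∈ Gset nv, ⟪ν, x - y⟫ ≤ 0}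

/-- The origin is a proper vertex of `G`. -/
def ProperVertex (nv : Fin N → Evec n) : Prop :=
  ∃ a0 : Evec n, ‖a0‖ = 1 ∧ IsCompact {x : Evec n | x ∈ Gset nv ∧ ⟪x, a0⟫ ≤ 1}

/-- Condition 2.1 (existence form). -/
def Cond21 (nv dv : Fin N → Evec n) : Prop :=
  ∀ lam : Set (Fin N), lam.Nonempty →
    ∃ dl ∈ coneGen dv lam, ∀ i ∈ lam, 0 < ⟪dl, nv i⟫

/-- Condition 2.1 with a fixed choice `d^λ = dlam λ` for each nonempty `λ`. -/
def Cond21At (nv dv : Fin N → Evec n) (dlam : Set (Fin N) → Evec n) : Prop :=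
  ∀ lam : Set (Fin N), lam.Nonempty →
    dlam lam ∈ coneGen dv lam ∧ ∀ i ∈ lam, 0 < ⟪dlam lam, nv i⟫

/-- The cone `C = cone{-d_i, i = 1,…,N}`. -/
def Cset (dv : Fin N → Evec n) : Set (Evec n) :=
  coneGen (fun i => -dv i) Set.univ

/-- Right continuous with left limits on `[0,∞)`. -/
def Cadlag (f : ℝ → Evec n) : Prop :=
  (∀ t : ℝ, 0 ≤ t → ContinuousWithinAt f (Ici t) t) ∧
  ∀ t : ℝ, 0 < t → ∃ l : Evec n, Tendsto f (𝓝[<] t) (𝓝 l)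

/-- `(φ, η)` solves the Skorohod problem for `ψ` with respect to `(G, d)`. -/
structure SPsol (nv dv : Fin N → Evec n) (ψ φ η : ℝ → Evec n) : Prop where
  init : φ 0 = ψ 0
  decomp : ∀ t : ℝ, 0 ≤ t → φ t = ψ t + η t
  memG : ∀ t : ℝ, 0 ≤ t → φ t ∈ Gset nv
  finVar : ∀ t : ℝ, 0 ≤ t → eVariationOn η (Icc 0 t) ≠ ⊤
  varMeasure : ∃ μ : Measure ℝ,
    (∀ t : ℝ, 0 ≤ t → μ (Icc 0 t) = eVariationOn η (Icc 0 t)) ∧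
    (∀ t : ℝ, 0 ≤ t → μ (Icc 0 t) = μ {s | s ∈ Icc 0 t ∧ φ s ∈ frontier (Gset nv)}) ∧
    ∃ γ : ℝ → Evec n, Measurable γ ∧ (∀ᵐ s ∂μ, γ s ∈ dDir nv dv (φ s)) ∧
      ∀ t : ℝ, 0 ≤ t → η t = ∫ s in Icc 0 t, γ s ∂μ

/-- Condition 2.2: the Skorohod map `Γ` is well defined on all cadlag paths starting
in `G` (existence and uniqueness of solutions of the SP) and is Lipschitz with
constant `ℓ` in the uniform metric. -/
def Cond22 (nv dv : Fin N → Evec n) (Γ : (ℝ → Evec n) → ℝ → Evec n) (ℓ : ℝ) : Prop :=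
  (∀ ψ, Cadlag ψ → ψ 0 ∈ Gset nv → ∃ η, SPsol nv dv ψ (Γ ψ) η) ∧
  (∀ ψ φ₁ η₁ φ₂ η₂, Cadlag ψ → ψ 0 ∈ Gset nv →
      SPsol nv dv ψ φ₁ η₁ → SPsol nv dv ψ φ₂ η₂ → ∀ t : ℝ, 0 ≤ t → φ₁ t = φ₂ t) ∧
  ∀ ψ₁ ψ₂, Cadlag ψ₁ → ψ₁ 0 ∈ Gset nv → Cadlag ψ₂ → ψ₂ 0 ∈ Gset nv →
    ∀ M : ℝ, (∀ t : ℝ, 0 ≤ t → ‖ψ₁ t - ψ₂ t‖ ≤ M) →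
      ∀ t : ℝ, 0 ≤ t → ‖Γ ψ₁ t - Γ ψ₂ t‖ ≤ ℓ * M

/-- The face `F_i = ∂G ∩ ∂G_i`. -/
def Fface (nv : Fin N → Evec n) (i : Fin N) : Set (Evec n) :=
  frontier (Gset nv) ∩ frontier {x : Evec n | 0 ≤ ⟪x, nv i⟫}

/-- `v(β,x) = β` on `G`, `= d^{λ(x)}` off `G`, with `λ(x) = {i : ⟨x,n_i⟩ ≤ 0}`. -/
def vRaw (nv : Fin N → Evec n) (dlam : Set (Fin N) → Evec n) (β x : Evec n) : Evec n :=
  if x ∈ Gset nv then β else dlam {i | ⟪x, nv i⟫ ≤ 0}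

/-- The mollified field `v^a(β,x)`. -/
def vMoll (nv : Fin N → Evec n) (dlam : Set (Fin N) → Evec n) (ρ : Evec n → ℝ)
    (a : ℝ) (β x : Evec n) : Evec n :=
  ((a * ‖x‖) ^ n)⁻¹ • ∫ y : Evec n, ρ ((a * ‖x‖)⁻¹ • (x - y)) • vRaw nv dlam β y

/-- The fields `v_i^a(β,x)`, `i = 0,1,…,N` (index `0` is `v_0^a`). -/
def vA (nv dv : Fin N → Evec n) (dlam : Set (Fin N) → Evec n) (ρ : Evec n → ℝ)
    (g : ℝ → ℝ) (a : ℝ) (β x : Evec n) : Fin (N + 1) → Evec n := fun i =>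
  if x = 0 then 0 else
    (Fin.cons
      (g (infDist x (Gset nv) / (a * ‖x‖)) • β +
        (1 - g (infDist x (Gset nv) / (a * ‖x‖))) • vMoll nv dlam ρ a β x)
      (fun j : Fin N =>
        g (infDist x (Fface nv j) / (a * ‖x‖)) • dv j +
          (1 - g (infDist x (Fface nv j) / (a * ‖x‖))) • vMoll nv dlam ρ a β x) :
      Fin (N + 1) → Evec n) i

/-- `K^a(β,x) = conv{v_i^a(β,x) : i = 0,…,N}`. -/
def KaB (nv dv : Fin N → Evec n) (dlam : Set (Fin N) → Evec n) (ρ : Evec n → ℝ)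
    (g : ℝ → ℝ) (a : ℝ) (β x : Evec n) : Set (Evec n) :=
  convexHull ℝ (Set.range (vA nv dv dlam ρ g a β x))

/-- `K^a(x) = ⋃_{β ∈ C₁} K^a(β,x)`. -/
def Ka (nv dv : Fin N → Evec n) (dlam : Set (Fin N) → Evec n) (ρ : Evec n → ℝ)
    (g : ℝ → ℝ) (C1 : Set (Evec n)) (a : ℝ) (x : Evec n) : Set (Evec n) :=
  ⋃ β ∈ C1, KaB nv dv dlam ρ g a β x

/-- `φ` is an absolutely continuous solution on `[0,∞)` of the differential
inclusion `φ' ∈ K(φ)`. -/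
def DIsol (K : Evec n → Set (Evec n)) (φ : ℝ → Evec n) : Prop :=
  ∃ φ' : ℝ → Evec n,
    (∀ t : ℝ, 0 ≤ t → IntegrableOn φ' (Icc 0 t)) ∧
    (∀ t : ℝ, 0 ≤ t → φ t = φ 0 + ∫ s in Icc 0 t, φ' s) ∧
    ∀ᵐ s ∂(volume.restrict (Ici (0 : ℝ))), φ' s ∈ K (φ s)

/-- `V^a(x)`, as an extended nonnegative real. -/
def VfunE (nv dv : Fin N → Evec n) (dlam : Set (Fin N) → Evec n) (ρ : Evec n → ℝ)
    (g ηf : ℝ → ℝ) (C1 : Set (Evec n)) (a : ℝ) (x : Evec n) : ℝ≥0∞ :=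
  ⨆ φ : {φ : ℝ → Evec n // φ 0 = x ∧ DIsol (Ka nv dv dlam ρ g C1 a) φ},
    ∫⁻ t in Ici (0 : ℝ), ENNReal.ofReal (ηf ‖φ.1 t‖)

/-- `V^a(x)` as a real number. -/
def Vfun (nv dv : Fin N → Evec n) (dlam : Set (Fin N) → Evec n) (ρ : Evec n → ℝ)
    (g ηf : ℝ → ℝ) (C1 : Set (Evec n)) (a : ℝ) (x : Evec n) : ℝ :=
  (VfunE nv dv dlam ρ g ηf C1 a x).toReal

/-- The limit set `K(x)` of the sets `K^{a_k}(x_k)` as `a_k → 0`, `x_k → x`. -/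
def Kzero (nv dv : Fin N → Evec n) (dlam : Set (Fin N) → Evec n) (ρ : Evec n → ℝ)
    (g : ℝ → ℝ) (C1 : Set (Evec n)) (x : Evec n) : Set (Evec n) :=
  {v | ∃ (as : ℕ → ℝ) (xs vs : ℕ → Evec n),
    (∀ k, as k ∈ Ioc (0 : ℝ) 1) ∧
    (∀ k, vs k ∈ Ka nv dv dlam ρ g C1 (as k) (xs k)) ∧
    Tendsto as atTop (𝓝 0) ∧ Tendsto xs atTop (𝓝 x) ∧ Tendsto vs atTop (𝓝 v)}

/-- `K̄(x)`, the closed convex hull of `K(x)`. -/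
def Kbar (nv dv : Fin N → Evec n) (dlam : Set (Fin N) → Evec n) (ρ : Evec n → ℝ)
    (g : ℝ → ℝ) (C1 : Set (Evec n)) (x : Evec n) : Set (Evec n) :=
  closure (convexHull ℝ (Kzero nv dv dlam ρ g C1 x))

/-- `δ₀ = inf{⟨d^λ, n_i⟩ : λ nonempty, i ∈ λ}`. -/
def delta0 (nv : Fin N → Evec n) (dlam : Set (Fin N) → Evec n) : ℝ :=
  sInf {r | ∃ (lam : Set (Fin N)) (i : Fin N), lam.Nonempty ∧ i ∈ lam ∧ r = ⟪dlam lam, nv i⟫}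


section AuxStmt14

variable {n N : ℕ}

lemma vMoll_norm_le' (nv : Fin N → Evec n) (dlam : Set (Fin N) → Evec n)
    {ρ : Evec n → ℝ} (hρc : Continuous ρ) (hρs : Function.support ρ ⊆ closedBall 0 1)
    {a : ℝ} (ha : 0 < a) {x : Evec n} (hx : x ≠ 0) (β : Evec n)
    {M : ℝ} (hM : ∀ y, ‖vRaw nv dlam β y‖ ≤ M) :
    ‖vMoll nv dlam ρ a β x‖ ≤ (∫ y, |ρ y|) * M := by
  have hc : 0 < a * ‖x‖ := mul_pos ha (norm_pos_iff.mpr hx)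
  set c := a * ‖x‖ with hcdef
  have hM0 : 0 ≤ M := le_trans (norm_nonneg _) (hM 0)
  have hρint : 0 ≤ ∫ y, |ρ y| := integral_nonneg fun y => abs_nonneg _
  set dom : Evec n → ℝ := fun y => |ρ (c⁻¹ • (x - y))| * M with hdom
  have hcont : Continuous dom := by
    have : Continuous fun y : Evec n => c⁻¹ • (x - y) := by
      fun_prop
    exact ((hρc.comp this).abs).mul continuous_const
  have hsupp : ∀ y, y ∉ closedBall x c → dom y = 0 := by
    intro y hy
    have hlt : c < ‖x - y‖ := by
      simp only [mem_closedBall, dist_comm, not_le] at hy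
      rwa [dist_eq_norm] at hy
    have h1 : (1 : ℝ) < ‖c⁻¹ • (x - y)‖ := by
      rw [norm_smul, Real.norm_eq_abs, abs_of_pos (inv_pos.mpr hc)]
      calc (1:ℝ) = c⁻¹ * c := (inv_mul_cancel₀ hc.ne').symm
        _ < c⁻¹ * ‖x - y‖ := mul_lt_mul_of_pos_left hlt (inv_pos.mpr hc)
    have : ρ (c⁻¹ • (x - y)) = 0 := by
      by_contra hne
      have := hρs (Function.mem_support.mpr hne)
      simp only [mem_closedBall, dist_zero_right] at this
      linarith
    simp [hdom, this]
  have hcs : HasCompactSupport dom :=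
    HasCompactSupport.intro (isCompact_closedBall x c) hsupp
  have hInt : Integrable dom := hcont.integrable_of_hasCompactSupport hcs
  have hnorm : ∀ y, ‖ρ (c⁻¹ • (x - y)) • vRaw nv dlam β y‖ ≤ dom y := by
    intro y
    rw [norm_smul, Real.norm_eq_abs]
    exact mul_le_mul_of_nonneg_left (hM y) (abs_nonneg _)
  have hI : ‖∫ y, ρ (c⁻¹ • (x - y)) • vRaw nv dlam β y‖ ≤ ∫ y, dom y :=
    norm_integral_le_of_norm_le hInt (Filter.Eventually.of_forall hnorm)
  have hdomint : ∫ y, dom y = (c ^ n * ∫ y, |ρ y|) * M := by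
    rw [hdom]
    rw [integral_mul_const]
    congr 1
    have h1 : (∫ y, |ρ (c⁻¹ • (x - y))|) = ∫ y, |ρ (c⁻¹ • y)| :=
      integral_sub_left_eq_self (fun z => |ρ (c⁻¹ • z)|) volume x
    rw [h1]
    have h2 := Measure.integral_comp_inv_smul_of_nonneg (volume : Measure (Evec n))
      (fun y => |ρ y|) hc.le
    rw [h2, finrank_euclideanSpace_fin, smul_eq_mul]
  have hcn : (0:ℝ) < c ^ n := pow_pos hc n
  calc ‖vMoll nv dlam ρ a β x‖
      = |(c ^ n)⁻¹| * ‖∫ y, ρ (c⁻¹ • (x - y)) • vRaw nv dlam β y‖ := by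
        rw [vMoll, ← hcdef, norm_smul, Real.norm_eq_abs]
    _ ≤ (c ^ n)⁻¹ * ((c ^ n * ∫ y, |ρ y|) * M) := by
        rw [abs_of_pos (inv_pos.mpr hcn)]
        exact mul_le_mul_of_nonneg_left (le_trans hI (le_of_eq hdomint)) (inv_pos.mpr hcn).le
    _ = (∫ y, |ρ y|) * M := by field_simp

lemma Ka_subset_closedBall (nv dv : Fin N → Evec n) (dlam : Set (Fin N) → Evec n)
    {ρ : Evec n → ℝ} (hρc : Continuous ρ) (hρs : Function.support ρ ⊆ closedBall 0 1)
    {g : ℝ → ℝ} (hgm : ∀ t, g t ∈ Icc (0:ℝ) 1)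
    (hdv : ∀ i, ‖dv i‖ = 1)
    {C1 : Set (Evec n)} (hC1c : IsCompact C1) :
    ∃ R : ℝ, 0 ≤ R ∧ ∀ a : ℝ, 0 < a → ∀ x : Evec n,
      Ka nv dv dlam ρ g C1 a x ⊆ closedBall 0 R := by
  obtain ⟨B1, hB1⟩ := hC1c.isBounded.subset_closedBall 0
  obtain ⟨M2, hM2⟩ := Set.Finite.bddAbove (Set.finite_range fun lam => ‖dlam lam‖)
  set B : ℝ := max B1 1 with hB
  set M : ℝ := max B M2 with hMdef
  have hβB : ∀ β ∈ C1, ‖β‖ ≤ B := by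
    intro β hβ
    have := hB1 hβ
    simp only [mem_closedBall, dist_zero_right] at this
    exact le_trans this (le_max_left _ _)
  have hdvB : ∀ j, ‖dv j‖ ≤ B := fun j => by
    rw [hdv j]; exact le_max_right _ _
  have hvRawM : ∀ β ∈ C1, ∀ y, ‖vRaw nv dlam β y‖ ≤ M := by
    intro β hβ y
    rw [vRaw]
    split
    · exact le_trans (hβB β hβ) (le_max_left _ _)
    · exact le_trans (hM2 (Set.mem_range_self _)) (le_max_right _ _)
  have hB0 : 0 ≤ B := le_trans zero_le_one (le_max_right _ _)
  have hρint : 0 ≤ ∫ y, |ρ y| := integral_nonneg fun y => abs_nonneg _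
  have hM0 : 0 ≤ M := le_trans hB0 (le_max_left _ _)
  have hsum0 : 0 ≤ B + (∫ y, |ρ y|) * M := by
    have := mul_nonneg hρint hM0; linarith
  refine ⟨B + (∫ y, |ρ y|) * M, hsum0, ?_⟩
  intro a ha x v hv
  rw [Ka, Set.mem_iUnion₂] at hv
  obtain ⟨β, hβ, hvv⟩ := hv
  have hrange : Set.range (vA nv dv dlam ρ g a β x) ⊆
      closedBall (0 : Evec n) (B + (∫ y, |ρ y|) * M) := by
    rintro - ⟨i, rfl⟩
    rw [mem_closedBall, dist_zero_right]
    by_cases hx : x = 0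
    · rw [vA]
      rw [hx, if_pos rfl, norm_zero]
      exact hsum0
    · have hmoll : ‖vMoll nv dlam ρ a β x‖ ≤ (∫ y, |ρ y|) * M :=
        vMoll_norm_le' nv dlam hρc hρs ha hx β (hvRawM β hβ)
      have key : ∀ (s : ℝ) (w : Evec n), s ∈ Icc (0:ℝ) 1 → ‖w‖ ≤ B →
          ‖s • w + (1 - s) • vMoll nv dlam ρ a β x‖ ≤ B + (∫ y, |ρ y|) * M := by
        intro s w hs hw
        calc ‖s • w + (1 - s) • vMoll nv dlam ρ a β x‖
            ≤ ‖s • w‖ + ‖(1 - s) • vMoll nv dlam ρ a β x‖ := norm_add_le _ _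
          _ = |s| * ‖w‖ + |1 - s| * ‖vMoll nv dlam ρ a β x‖ := by
              rw [norm_smul, norm_smul, Real.norm_eq_abs, Real.norm_eq_abs]
          _ ≤ 1 * B + 1 * ((∫ y, |ρ y|) * M) := by
              have h1 : |s| ≤ 1 := by rw [abs_of_nonneg hs.1]; exact hs.2
              have h2 : |1 - s| ≤ 1 := by
                rw [abs_of_nonneg (by linarith [hs.2])]; linarith [hs.1]
              have hmn : 0 ≤ ‖vMoll nv dlam ρ a β x‖ := norm_nonneg _
              exact add_le_add (mul_le_mul h1 hw (norm_nonneg _) zero_le_one)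
                (mul_le_mul h2 hmoll hmn zero_le_one)
          _ = B + (∫ y, |ρ y|) * M := by ring
      rw [vA]
      simp only [hx, if_neg hx]
      refine Fin.cases ?_ ?_ i
      · rw [Fin.cons_zero]
        exact key _ _ (hgm _) (hβB β hβ)
      · intro j
        rw [Fin.cons_succ]
        exact key _ _ (hgm _) (hdvB j)
  exact convexHull_min hrange (convex_closedBall _ _) hvv

lemma one_div_nat_pos' (m : ℕ) : (0:ℝ) < 1 / ((m:ℝ) + 1) := by positivity

lemma tendsto_add_one_div_nhdsNE (t : ℝ) :
    Tendsto (fun m : ℕ => t + 1 / ((m:ℝ) + 1)) atTop (𝓝[≠] t) := by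
  apply tendsto_nhdsWithin_of_tendsto_nhds_of_eventually_within
  · have h := tendsto_one_div_add_atTop_nhds_zero_nat (𝕜 := ℝ)
    have h2 := (tendsto_const_nhds (x := t) (f := (atTop : Filter ℕ))).add h
    simpa using h2
  · filter_upwards with m
    have hp := one_div_nat_pos' m
    simp only [mem_compl_iff, mem_singleton_iff]
    exact ne_of_gt (lt_add_of_pos_right t hp)

lemma lipschitzWith_deriv_norm_le {L : NNReal} {ψ : ℝ → Evec n} (hψ : LipschitzWith L ψ)
    (t : ℝ) : ‖deriv ψ t‖ ≤ L := by
  by_cases hd : DifferentiableAt ℝ ψ t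
  · have h := hasDerivAt_iff_tendsto_slope.mp hd.hasDerivAt
    refine le_of_tendsto h.norm ?_
    filter_upwards [self_mem_nhdsWithin] with y hy
    have hyne : y ≠ t := by simpa [mem_compl_iff, mem_singleton_iff] using hy
    have hne : y - t ≠ 0 := sub_ne_zero.mpr hyne
    have habs : (0:ℝ) < |y - t| := abs_pos.mpr hne
    rw [slope_def_module, norm_smul, Real.norm_eq_abs, abs_inv]
    have hd2 : dist (ψ y) (ψ t) ≤ (L:ℝ) * dist y t := hψ.dist_le_mul y t
    rw [dist_eq_norm, Real.dist_eq] at hd2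
    calc |y - t|⁻¹ * ‖ψ y - ψ t‖ ≤ |y - t|⁻¹ * ((L:ℝ) * |y - t|) :=
          mul_le_mul_of_nonneg_left hd2 (inv_nonneg.mpr habs.le)
      _ = L := by field_simp
  · rw [deriv_zero_of_not_differentiableAt hd, norm_zero]
    exact L.coe_nonneg

lemma tendsto_avg_integral {ψ : ℝ → Evec n} (hcont : Continuous ψ) (u : ℝ) :
    Tendsto (fun m : ℕ => (1 / ((m:ℝ) + 1))⁻¹ • ∫ s in u..(u + 1/((m:ℝ)+1)), ψ s)
      atTop (𝓝 (ψ u)) := by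
  have hΦ : HasDerivAt (fun v => ∫ s in u..v, ψ s) (ψ u) u :=
    intervalIntegral.integral_hasDerivAt_right (hcont.intervalIntegrable u u)
      (hcont.stronglyMeasurableAtFilter volume (𝓝 u)) hcont.continuousAt
  have h := (hasDerivAt_iff_tendsto_slope.mp hΦ).comp (tendsto_add_one_div_nhdsNE u)
  refine h.congr fun m => ?_
  show slope (fun v => ∫ s in u..v, ψ s) u (u + 1/((m:ℝ)+1)) = _
  rw [slope_def_module, add_sub_cancel_left]
  simp only [intervalIntegral.integral_same, sub_zero]

lemma lipschitz_ftc {L : NNReal} {ψ : ℝ → Evec n} (hψ : LipschitzWith L ψ)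
    {t : ℝ} (ht : 0 ≤ t) : ∫ s in Icc (0:ℝ) t, deriv ψ s = ψ t - ψ 0 := by
  have hcont := hψ.continuous
  have hii : ∀ a b : ℝ, IntervalIntegrable ψ volume a b := fun a b =>
    hcont.intervalIntegrable a b
  set hm : ℕ → ℝ := fun m => 1 / ((m:ℝ) + 1) with hhdef
  have hpos : ∀ m, 0 < hm m := fun m => one_div_nat_pos' m
  set F : ℕ → ℝ → Evec n := fun m s => (hm m)⁻¹ • (ψ (s + hm m) - ψ s) with hF
  have hcontF : ∀ m, Continuous (F m) := fun m => by
    show Continuous fun s => (hm m)⁻¹ • (ψ (s + hm m) - ψ s)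
    fun_prop
  have hlim1 : Tendsto (fun m => ∫ s in (0:ℝ)..t, F m s) atTop
      (𝓝 (∫ s in (0:ℝ)..t, deriv ψ s)) := by
    apply intervalIntegral.tendsto_integral_filter_of_dominated_convergence
      (bound := fun _ => (L:ℝ))
    · filter_upwards with m
      exact (hcontF m).aestronglyMeasurable
    · filter_upwards with m
      filter_upwards with s
      intro _
      have hd2 : dist (ψ (s + hm m)) (ψ s) ≤ (L:ℝ) * dist (s + hm m) s := hψ.dist_le_mul _ _
      rw [dist_eq_norm, Real.dist_eq, add_sub_cancel_left, abs_of_pos (hpos m)] at hd2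
      show ‖(hm m)⁻¹ • (ψ (s + hm m) - ψ s)‖ ≤ (L:ℝ)
      rw [norm_smul, Real.norm_eq_abs, abs_inv, abs_of_pos (hpos m)]
      calc (hm m)⁻¹ * ‖ψ (s + hm m) - ψ s‖ ≤ (hm m)⁻¹ * ((L:ℝ) * hm m) :=
            mul_le_mul_of_nonneg_left hd2 (inv_nonneg.mpr (hpos m).le)
        _ = L := by rw [mul_comm, mul_assoc, mul_inv_cancel₀ (hpos m).ne', mul_one]
    · exact intervalIntegrable_const
    · have hae := hψ.ae_differentiableAt (μ := volume)
      filter_upwards [hae] with s hs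
      intro _
      have h1 := (hasDerivAt_iff_tendsto_slope.mp hs.hasDerivAt).comp
        (tendsto_add_one_div_nhdsNE s)
      refine h1.congr fun m => ?_
      show slope ψ s (s + hm m) = F m s
      rw [slope_def_module, add_sub_cancel_left]
  have key : ∀ m, (∫ s in (0:ℝ)..t, F m s)
      = (hm m)⁻¹ • ((∫ s in t..(t + hm m), ψ s) - ∫ s in (0:ℝ)..(0 + hm m), ψ s) := by
    intro m
    have h0 : (∫ s in (0:ℝ)..t, F m s)
        = (hm m)⁻¹ • ∫ s in (0:ℝ)..t, (ψ (s + hm m) - ψ s) := by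
      rw [← intervalIntegral.integral_smul]
    rw [h0]
    congr 1
    have hc2 : Continuous fun s : ℝ => ψ (s + hm m) := hcont.comp (continuous_add_right _)
    rw [intervalIntegral.integral_sub (hc2.intervalIntegrable _ _) (hii _ _)]
    have h1 : (∫ s in (0:ℝ)..t, ψ (s + hm m)) = ∫ s in (0 + hm m)..(t + hm m), ψ s :=
      intervalIntegral.integral_comp_add_right ψ (hm m)
    rw [h1]
    have h2 := intervalIntegral.integral_add_adjacent_intervals
      (hii 0 (0 + hm m)) (hii (0 + hm m) (t + hm m))
    have h3 := intervalIntegral.integral_add_adjacent_intervals (hii 0 t) (hii t (t + hm m))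
    have h4 := h2.trans h3.symm
    have h5 : (∫ s in (0 + hm m)..(t + hm m), ψ s)
        = (∫ s in (0:ℝ)..t, ψ s) + (∫ s in t..(t + hm m), ψ s) - ∫ s in (0:ℝ)..(0 + hm m), ψ s := by
      rw [← h4]; abel
    rw [h5]; abel
  have hlim2 : Tendsto (fun m => ∫ s in (0:ℝ)..t, F m s) atTop (𝓝 (ψ t - ψ 0)) := by
    have hA := tendsto_avg_integral hcont t
    have hB := tendsto_avg_integral hcont 0
    have hAB := hA.sub hB
    refine Tendsto.congr (fun m => ?_) hAB
    rw [key m, smul_sub]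
  have huniq := tendsto_nhds_unique hlim1 hlim2
  rw [intervalIntegral.integral_of_le ht] at huniq
  rw [MeasureTheory.integral_Icc_eq_integral_Ioc]
  exact huniq

end AuxStmt14

theorem stmt14
    {n N : ℕ} (hn : 1 ≤ n) (hNn : n ≤ N)
    (nv dv : Fin N → Evec n)
    (hnv : ∀ i, ‖nv i‖ = 1) (hdv : ∀ i, ‖dv i‖ = 1)
    (hdn : ∀ i, 0 < ⟪dv i, nv i⟫)
    (hvertex : ProperVertex nv)
    (dlam : Set (Fin N) → Evec n) (hdlam : Cond21At nv dv dlam)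
    (C1 : Set (Evec n)) (hC1c : IsCompact C1) (hC1 : C1 ⊆ interior (Cset dv))
    (δ : ℝ) (hδ : 0 < δ) (hδd : ∀ x ∈ C1, δ ≤ infDist x (frontier (Cset dv)))
    (ρ : Evec n → ℝ) (hρ : ContDiff ℝ (⊤ : ℕ∞) ρ)
    (hρs : Function.support ρ ⊆ closedBall (0 : Evec n) 1)
    (hρi : ∫ x : Evec n, ρ x = 1)
    (g : ℝ → ℝ) (hg : ContDiff ℝ (⊤ : ℕ∞) g) (hgm : ∀ t, g t ∈ Icc (0:ℝ) 1)
    (hg1 : ∀ t ∈ Icc (0:ℝ) (1/2), g t = 1) (hg0 : ∀ t : ℝ, 1 ≤ t → g t = 0)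
    (xs : ℕ → Evec n) (as : ℕ → ℝ) (φs : ℕ → ℝ → Evec n) (x : Evec n) (φ : ℝ → Evec n)
    (has : ∀ k, as k ∈ Ioc (0:ℝ) 1)
    (hxs : Tendsto xs atTop (𝓝 x)) (has0 : Tendsto as atTop (𝓝 0))
    (hunif : ∀ K : Set ℝ, K ⊆ Ici 0 → IsCompact K →
      TendstoUniformlyOn (fun k => φs k) φ atTop K)
    (hsol : ∀ k, φs k 0 = xs k ∧ DIsol (Ka nv dv dlam ρ g C1 (as k)) (φs k))
    :
    (∃ L : NNReal, LipschitzOnWith L φ (Ici 0)) ∧ φ 0 = x ∧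
      DIsol (Kbar nv dv dlam ρ g C1) φ := by
  classical
  have hφ0 : ∀ k, φs k 0 = xs k := fun k => (hsol k).1
  have hsolD : ∀ k, DIsol (Ka nv dv dlam ρ g C1 (as k)) (φs k) := fun k => (hsol k).2
  choose D hDint hDrep hDmem using hsolD
  obtain ⟨R, hR0, hKa⟩ := Ka_subset_closedBall nv dv dlam hρ.continuous hρs hgm hdv hC1c
  have hpt : ∀ t : ℝ, 0 ≤ t → Tendsto (fun k => φs k t) atTop (𝓝 (φ t)) := by
    intro t ht
    exact (hunif {t} (by simpa using ht) isCompact_singleton).tendsto_at (mem_singleton t)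
  have hφx : φ 0 = x := by
    have h1 := hpt 0 le_rfl
    have h2 : Tendsto (fun k => φs k 0) atTop (𝓝 x) := by
      have : (fun k => φs k 0) = xs := funext hφ0
      rw [this]; exact hxs
    exact tendsto_nhds_unique h1 h2
  have hDball : ∀ k, ∀ᵐ u ∂(volume.restrict (Ici (0:ℝ))), ‖D k u‖ ≤ R := by
    intro k
    filter_upwards [hDmem k] with u hu
    have := hKa (as k) (has k).1 (φs k u) hu
    simpa [mem_closedBall, dist_zero_right] using this
  have hDb : ∀ (k : ℕ) (s : Set ℝ), s ⊆ Ici (0:ℝ) → ∀ᵐ u ∂(volume.restrict s), ‖D k u‖ ≤ R :=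
    fun k s hs => ae_restrict_of_ae_restrict_of_subset hs (hDball k)
  have hrep : ∀ (k : ℕ) (s t : ℝ), 0 ≤ s → s ≤ t →
      φs k t - φs k s = ∫ u in Ioc s t, D k u := by
    intro k s t hs hst
    have ht0 : (0:ℝ) ≤ t := le_trans hs hst
    have hint_t : IntegrableOn (D k) (Icc 0 t) := hDint k t ht0
    have hint_s : IntegrableOn (D k) (Icc 0 s) := hint_t.mono_set (Icc_subset_Icc_right hst)
    have hint_o : IntegrableOn (D k) (Ioc s t) :=
      hint_t.mono_set (fun u hu => ⟨le_trans hs hu.1.le, hu.2⟩)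
    have hu : Icc (0:ℝ) s ∪ Ioc s t = Icc 0 t := Icc_union_Ioc_eq_Icc hs hst
    have hdisj : Disjoint (Icc (0:ℝ) s) (Ioc s t) := by
      rw [Set.disjoint_left]; rintro u ⟨_, hu2⟩ ⟨hu3, _⟩; linarith
    have hun := MeasureTheory.setIntegral_union hdisj measurableSet_Ioc hint_s hint_o
    rw [hu] at hun
    rw [hDrep k t ht0, hDrep k s hs, hun]
    abel
  have hlipk : ∀ (k : ℕ) (s t : ℝ), 0 ≤ s → s ≤ t → ‖φs k t - φs k s‖ ≤ R * (t - s) := by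
    intro k s t hs hst
    rw [hrep k s t hs hst]
    have hb := hDb k (Ioc s t) (fun u hu => le_trans hs hu.1.le)
    have hfin : volume (Ioc s t) < ⊤ := by
      rw [Real.volume_Ioc]; exact ENNReal.ofReal_lt_top
    have hest := MeasureTheory.norm_setIntegral_le_of_norm_le_const_ae hfin hb
    rwa [Real.volume_real_Ioc_of_le hst] at hest
  have hlip : ∀ s t : ℝ, 0 ≤ s → s ≤ t → ‖φ t - φ s‖ ≤ R * (t - s) := by
    intro s t hs hst
    have h1 : Tendsto (fun k => φs k t - φs k s) atTop (𝓝 (φ t - φ s)) :=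
      (hpt t (le_trans hs hst)).sub (hpt s hs)
    exact le_of_tendsto h1.norm (Filter.Eventually.of_forall fun k => hlipk k s t hs hst)
  have hRcoe : (R.toNNReal : ℝ) = R := Real.coe_toNNReal R hR0
  have hlipOn : LipschitzOnWith R.toNNReal φ (Ici 0) := by
    rw [lipschitzOnWith_iff_dist_le_mul]
    intro a ha b hb
    rw [hRcoe]
    rcases le_total b a with h | h
    · rw [dist_eq_norm, Real.dist_eq, abs_of_nonneg (by linarith : (0:ℝ) ≤ a - b)]
      exact hlip b a hb h
    · rw [dist_comm (φ a) (φ b), dist_comm a b, dist_eq_norm, Real.dist_eq,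
        abs_of_nonneg (by linarith : (0:ℝ) ≤ b - a)]
      exact hlip a b ha h
  set ψ : ℝ → Evec n := fun u => φ (max u 0) with hψdef
  have hψeq : ∀ u : ℝ, 0 ≤ u → ψ u = φ u := by
    intro u hu; rw [hψdef]; simp [max_eq_left hu]
  have hψlip : LipschitzWith R.toNNReal ψ := by
    rw [lipschitzWith_iff_dist_le_mul]
    intro a b
    have h1 : dist (ψ a) (ψ b) ≤ (R.toNNReal : ℝ) * dist (max a 0) (max b 0) :=
      (lipschitzOnWith_iff_dist_le_mul.mp hlipOn) (max a 0) (le_max_right a 0)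
        (max b 0) (le_max_right b 0)
    have h2 : dist (max a 0) (max b 0) ≤ dist a b := by
      rw [Real.dist_eq, Real.dist_eq]
      exact abs_max_sub_max_le_abs a b 0
    calc dist (ψ a) (ψ b) ≤ (R.toNNReal : ℝ) * dist (max a 0) (max b 0) := h1
      _ ≤ (R.toNNReal : ℝ) * dist a b :=
          mul_le_mul_of_nonneg_left h2 (R.toNNReal.coe_nonneg)
  have hdiffae : ∀ᵐ u ∂(volume : Measure ℝ), DifferentiableAt ℝ ψ u :=
    hψlip.ae_differentiableAt
  have hφ'b : ∀ u, ‖deriv ψ u‖ ≤ R := by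
    intro u
    have := lipschitzWith_deriv_norm_le hψlip u
    rwa [hRcoe] at this
  have hφ'int : ∀ t : ℝ, 0 ≤ t → IntegrableOn (deriv ψ) (Icc 0 t) := by
    intro t ht
    refine Integrable.mono' (integrableOn_const (C := R) ?_)
      ((stronglyMeasurable_deriv ψ).aestronglyMeasurable)
      (Filter.Eventually.of_forall fun u => hφ'b u)
    rw [Real.volume_Icc]; exact ENNReal.ofReal_ne_top
  have hftc : ∀ t : ℝ, 0 ≤ t → φ t = φ 0 + ∫ s in Icc (0:ℝ) t, deriv ψ s := by
    intro t ht
    rw [lipschitz_ftc hψlip ht, hψeq t ht, hψeq 0 le_rfl]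
    abel
  have hmem : ∀ t : ℝ, 0 ≤ t → DifferentiableAt ℝ ψ t →
      deriv ψ t ∈ Kbar nv dv dlam ρ g C1 (φ t) := by
    intro t ht hdt
    set KZ := Kzero nv dv dlam ρ g C1 (φ t) with hKZ
    set S := convexHull ℝ KZ with hSdef
    have key : ∀ ε : ℝ, 0 < ε → deriv ψ t ∈ cthickening (3 * ε) S := by
      intro ε hε
      have E2 : ∃ δ1 > (0:ℝ), ∃ k0 : ℕ, ∀ k ≥ k0, ∀ y : Evec n, dist y (φ t) ≤ δ1 →
          Ka nv dv dlam ρ g C1 (as k) y ⊆ cthickening ε KZ := by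
        by_contra hcon
        push_neg at hcon
        have hcon' : ∀ j : ℕ, ∃ k, j ≤ k ∧ ∃ y v, dist y (φ t) ≤ 1/((j:ℝ)+1) ∧
            v ∈ Ka nv dv dlam ρ g C1 (as k) y ∧ v ∉ cthickening ε KZ := by
          intro j
          obtain ⟨k, hk, y, hy, hns⟩ := hcon (1/((j:ℝ)+1)) (one_div_nat_pos' j) j
          obtain ⟨v, hv, hvn⟩ := Set.not_subset.mp hns
          exact ⟨k, hk, y, v, hy, hv, hvn⟩
        choose k hk y v hy hv hvn using hcon'
        have hvball : ∀ j, v j ∈ closedBall (0 : Evec n) R :=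
          fun j => hKa (as (k j)) (has (k j)).1 (y j) (hv j)
        obtain ⟨vinf, -, m, hmono, hvm⟩ :=
          (isCompact_closedBall (0 : Evec n) R).tendsto_subseq hvball
        have hkm : Tendsto (fun i => k (m i)) atTop atTop :=
          tendsto_atTop_mono (fun i => le_trans hmono.le_apply (hk (m i))) tendsto_id
        have h1 : Tendsto (fun i => as (k (m i))) atTop (𝓝 0) := has0.comp hkm
        have h2 : Tendsto (fun i => y (m i)) atTop (𝓝 (φ t)) := by
          rw [tendsto_iff_dist_tendsto_zero]
          refine squeeze_zero (fun i => dist_nonneg) (fun i => ?_)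
            tendsto_one_div_add_atTop_nhds_zero_nat
          refine le_trans (hy (m i)) ?_
          apply one_div_le_one_div_of_le (by positivity)
          have hmi : i ≤ m i := hmono.le_apply
          have hci : ((i:ℝ)) ≤ ((m i : ℕ) : ℝ) := Nat.cast_le.mpr hmi
          linarith
        have hmemKZ : vinf ∈ KZ := by
          rw [hKZ, Kzero]
          exact ⟨_, _, _, fun i => has _, fun i => hv (m i), h1, h2, hvm⟩
        have hge : ∀ i, ENNReal.ofReal ε ≤ EMetric.infEdist ((v ∘ m) i) KZ := by
          intro i
          have hni := hvn (m i)
          rw [Metric.mem_cthickening_iff] at hni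
          exact (lt_of_not_ge hni).le
        have hcontE : Tendsto (fun i => EMetric.infEdist ((v ∘ m) i) KZ) atTop
            (𝓝 (EMetric.infEdist vinf KZ)) :=
          (EMetric.continuous_infEdist.tendsto vinf).comp hvm
        have hge2 : ENNReal.ofReal ε ≤ EMetric.infEdist vinf KZ :=
          le_of_tendsto_of_tendsto' tendsto_const_nhds hcontE hge
        rw [show EMetric.infEdist vinf KZ = 0 from Metric.infEDist_zero_of_mem hmemKZ] at hge2
        exact absurd hge2 (by simpa using (ENNReal.ofReal_pos.mpr hε).ne')
      obtain ⟨δ1, hδ1, k0, hE2⟩ := E2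
      have hslope : Tendsto (fun m : ℕ => slope ψ t (t + 1/((m:ℝ)+1))) atTop
          (𝓝 (deriv ψ t)) :=
        (hasDerivAt_iff_tendsto_slope.mp hdt.hasDerivAt).comp (tendsto_add_one_div_nhdsNE t)
      have hev1 : ∀ᶠ m : ℕ in atTop,
          slope ψ t (t + 1/((m:ℝ)+1)) ∈ closedBall (deriv ψ t) ε :=
        hslope.eventually_mem (closedBall_mem_nhds _ hε)
      have hev2 : ∀ᶠ m : ℕ in atTop, R * (1/((m:ℝ)+1)) ≤ δ1/2 := by
        have htd : Tendsto (fun m : ℕ => R * (1/((m:ℝ)+1))) atTop (𝓝 (R * 0)) :=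
          tendsto_const_nhds.mul tendsto_one_div_add_atTop_nhds_zero_nat
        rw [mul_zero] at htd
        exact htd.eventually_le_const (by linarith)
      obtain ⟨mN, hεa, hbb⟩ := (hev1.and hev2).exists
      set h : ℝ := 1/((mN:ℝ)+1) with hhdef2
      have hh : 0 < h := one_div_nat_pos' mN
      have hth : 0 ≤ t + h := by linarith
      have hev3 : ∀ᶠ kk : ℕ in atTop, ∀ s ∈ Icc t (t+h), dist (φ s) (φs kk s) < δ1/2 :=
        (Metric.tendstoUniformlyOn_iff.mp
          (hunif (Icc t (t+h)) (fun s hs => le_trans ht hs.1) isCompact_Icc)) (δ1/2)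
          (by linarith)
      have hq : Tendsto (fun kk => h⁻¹ • (φs kk (t+h) - φs kk t)) atTop
          (𝓝 (h⁻¹ • (φ (t+h) - φ t))) :=
        ((hpt (t+h) hth).sub (hpt t ht)).const_smul h⁻¹
      have hev4 : ∀ᶠ kk : ℕ in atTop,
          h⁻¹ • (φs kk (t+h) - φs kk t) ∈ closedBall (h⁻¹ • (φ (t+h) - φ t)) ε :=
        hq.eventually_mem (closedBall_mem_nhds _ hε)
      obtain ⟨k1, hk01, hk3, hk4⟩ := ((eventually_ge_atTop k0).and (hev3.and hev4)).exists
      set T := cthickening ε S with hT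
      have hTc : Convex ℝ T := (convex_convexHull ℝ KZ).cthickening ε
      have hTcl : IsClosed T := isClosed_cthickening
      have hsubT : cthickening ε KZ ⊆ T :=
        cthickening_subset_of_subset ε (subset_convexHull ℝ KZ)
      have haeT : ∀ᵐ s ∂(volume.restrict (Ioc t (t+h))), D k1 s ∈ T := by
        have hmm := ae_restrict_of_ae_restrict_of_subset
          (show Ioc t (t+h) ⊆ Ici (0:ℝ) from fun s hs => le_trans ht hs.1.le) (hDmem k1)
        filter_upwards [hmm, ae_restrict_mem measurableSet_Ioc] with s hs1 hs2
        have hd1 : dist (φs k1 s) (φ s) < δ1/2 := by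
          rw [dist_comm]; exact hk3 s ⟨hs2.1.le, hs2.2⟩
        have hd2 : dist (φ s) (φ t) ≤ δ1/2 := by
          rw [dist_eq_norm]
          refine le_trans (hlip t s ht hs2.1.le) ?_
          have hsh : s - t ≤ h := by linarith [hs2.2]
          calc R * (s - t) ≤ R * h := mul_le_mul_of_nonneg_left hsh hR0
            _ ≤ δ1/2 := hbb
        have hdd : dist (φs k1 s) (φ t) ≤ δ1 := by
          calc dist (φs k1 s) (φ t) ≤ dist (φs k1 s) (φ s) + dist (φ s) (φ t) :=
                dist_triangle _ _ _
            _ ≤ δ1/2 + δ1/2 := add_le_add hd1.le hd2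
            _ = δ1 := by ring
        exact hsubT (hE2 k1 hk01 (φs k1 s) hdd hs1)
      have hIoc0 : volume (Ioc t (t+h)) ≠ 0 := by
        rw [Real.volume_Ioc]
        simp only [ne_eq, ENNReal.ofReal_eq_zero, not_le]
        linarith
      have hIocT : volume (Ioc t (t+h)) ≠ ⊤ := by
        rw [Real.volume_Ioc]; exact ENNReal.ofReal_ne_top
      have hIint : IntegrableOn (D k1) (Ioc t (t+h)) :=
        (hDint k1 (t+h) hth).mono_set (fun u hu => ⟨le_trans ht hu.1.le, hu.2⟩)
      have havg := hTc.set_average_mem hTcl hIoc0 hIocT haeT hIint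
      have havg_eq : (⨍ s in Ioc t (t+h), D k1 s) = h⁻¹ • (φs k1 (t+h) - φs k1 t) := by
        rw [setAverage_eq, Real.volume_real_Ioc_of_le (by linarith : t ≤ t + h),
          show t + h - t = h by ring, ← hrep k1 t (t+h) ht (by linarith)]
      have hqT : h⁻¹ • (φs k1 (t+h) - φs k1 t) ∈ T := by rw [← havg_eq]; exact havg
      have hslope_eq : slope ψ t (t+h) = h⁻¹ • (φ (t+h) - φ t) := by
        rw [slope_def_module, add_sub_cancel_left, hψeq (t+h) hth, hψeq t ht]
      have hdist : dist (deriv ψ t) (h⁻¹ • (φs k1 (t+h) - φs k1 t)) ≤ 2 * ε := by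
        have hεa' : dist (slope ψ t (t+h)) (deriv ψ t) ≤ ε := by
          rw [← mem_closedBall]; exact hεa
        have hk4' : dist (h⁻¹ • (φs k1 (t+h) - φs k1 t)) (h⁻¹ • (φ (t+h) - φ t)) ≤ ε := by
          rw [← mem_closedBall]; exact hk4
        calc dist (deriv ψ t) (h⁻¹ • (φs k1 (t+h) - φs k1 t))
            ≤ dist (deriv ψ t) (h⁻¹ • (φ (t+h) - φ t)) +
              dist (h⁻¹ • (φ (t+h) - φ t)) (h⁻¹ • (φs k1 (t+h) - φs k1 t)) :=
              dist_triangle _ _ _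
          _ ≤ ε + ε := add_le_add
              (by rw [← hslope_eq, dist_comm]; exact hεa') (by rw [dist_comm]; exact hk4')
          _ = 2*ε := by ring
      rw [Metric.mem_cthickening_iff]
      calc EMetric.infEdist (deriv ψ t) S
          ≤ EMetric.infEdist (h⁻¹ • (φs k1 (t+h) - φs k1 t)) S +
            edist (deriv ψ t) (h⁻¹ • (φs k1 (t+h) - φs k1 t)) :=
            EMetric.infEdist_le_infEdist_add_edist
        _ ≤ ENNReal.ofReal ε + ENNReal.ofReal (2*ε) := add_le_add
            (Metric.mem_cthickening_iff.mp hqT)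
            (by rw [edist_dist]; exact ENNReal.ofReal_le_ofReal hdist)
        _ = ENNReal.ofReal (3*ε) := by
            rw [← ENNReal.ofReal_add hε.le (by linarith)]; ring_nf
    rw [Kbar, ← hKZ, ← hSdef, Metric.closure_eq_iInter_cthickening]
    simp only [mem_iInter]
    intro δ2 hδ2
    have hk := key (δ2/3) (by linarith)
    rwa [show 3*(δ2/3) = δ2 by ring] at hk
  refine ⟨⟨R.toNNReal, hlipOn⟩, hφx, deriv ψ, hφ'int, ?_, ?_⟩
  · intro t ht
    exact hftc t ht
  · filter_upwards [ae_restrict_of_ae hdiffae, ae_restrict_mem measurableSet_Ici] with s h1 h2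
    exact hmem s h2 h1


end
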